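/- Let k be a commutative ring containing the rationals (a ℚ-algebra) and let B be a commutative bialgebra over k. Let r ∈ B⊗B be a finite sum r = Σᵢ xᵢ⊗yᵢ in which every xᵢ and every yᵢ is primitive, i.e. Δ(x) = x⊗1 + 1⊗x. Then the exponential F := exp(ħ·r) = Σ_{n≥0} ħⁿ·rⁿ/n! ∈ (B⊗B)[[ħ]] is a Drinfel'd twist on the power-series bialgebra B[[ħ]]: F is invertible, it is normalized in the sense that applying ε⊗id and id⊗ε coefficientwise to F gives the constant power series 1, and the 2-cocycle condition (F⊗1)·((Δ⊗id)(F)) = (1⊗F)·((id⊗Δ)(F)) holds in (B⊗B⊗B)[[ħ]], where Δ⊗id, id⊗Δ and the leg embeddings are applied coefficientwise. -/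

import Mathlib

/-!
STATEMENT 10: Over a commutative ring `k ⊇ ℚ` and a commutative bialgebra `B`, if
`r ∈ B⊗B` is a finite sum of tensors of primitive elements, then
`F := exp(ħ·r) = Σ ħⁿ rⁿ/n!` is a Drinfel'd twist on the power-series bialgebra
`B[[ħ]]`: it is invertible, normalized, and satisfies the 2-cocycle condition (with
all structure maps applied coefficientwise).
-/

open TensorProduct

noncomputable section

namespace Stmt

variable (R : Type*) [CommRing R] [Algebra ℚ R] (B : Type*) [CommRing B] [Bialgebra R B]

/-- Comultiplication as an algebra homomorphism. -/
def Δ : B →ₐ[R] B ⊗[R] B := Bialgebra.comulAlgHom R B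

/-- Counit as an algebra homomorphism. -/
def ε : B →ₐ[R] R := Bialgebra.counitAlgHom R B

/-- Leg embedding `x ↦ x₁₂` of `B ⊗ B` into `B ⊗ B ⊗ B`. -/
def ι₁₂ : B ⊗[R] B →ₐ[R] B ⊗[R] (B ⊗[R] B) :=
  Algebra.TensorProduct.map (AlgHom.id R B) Algebra.TensorProduct.includeLeft

/-- Leg embedding `x ↦ x₂₃` of `B ⊗ B` into `B ⊗ B ⊗ B`. -/
def ι₂₃ : B ⊗[R] B →ₐ[R] B ⊗[R] (B ⊗[R] B) :=
  Algebra.TensorProduct.includeRight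

/-- `Δ ⊗ id : B ⊗ B → B ⊗ B ⊗ B` (re-associated). -/
def Δ₁ : B ⊗[R] B →ₐ[R] B ⊗[R] (B ⊗[R] B) :=
  (Algebra.TensorProduct.assoc R R R B B B).toAlgHom.comp
    (Algebra.TensorProduct.map (Δ R B) (AlgHom.id R B))

/-- `id ⊗ Δ : B ⊗ B → B ⊗ B ⊗ B`. -/
def Δ₂ : B ⊗[R] B →ₐ[R] B ⊗[R] (B ⊗[R] B) :=
  Algebra.TensorProduct.map (AlgHom.id R B) (Δ R B)

/-- `ε ⊗ id : B ⊗ B → B`. -/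
def ε₁ : B ⊗[R] B →ₐ[R] B :=
  (Algebra.TensorProduct.lid R B).toAlgHom.comp
    (Algebra.TensorProduct.map (ε R B) (AlgHom.id R B))

/-- `id ⊗ ε : B ⊗ B → B`. -/
def ε₂ : B ⊗[R] B →ₐ[R] B :=
  (Algebra.TensorProduct.rid R R B).toAlgHom.comp
    (Algebra.TensorProduct.map (AlgHom.id R B) (ε R B))

/-- The formal exponential `exp(ħ·r) = Σ_{n≥0} ħⁿ · rⁿ/n!` as a power series with
coefficients in `B ⊗ B`. -/
def expF (r : B ⊗[R] B) : PowerSeries (B ⊗[R] B) :=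
  PowerSeries.mk fun n => (algebraMap ℚ R ((n.factorial : ℚ)⁻¹)) • r ^ n


set_option linter.unusedSectionVars false

/-- general exponential -/
def E (A : Type*) [CommRing A] [Algebra R A] (a : A) : PowerSeries A :=
  PowerSeries.mk fun n => (algebraMap ℚ R ((n.factorial : ℚ)⁻¹)) • a ^ n

lemma E_map {A A' : Type*} [CommRing A] [Algebra R A] [CommRing A'] [Algebra R A']
    (f : A →ₐ[R] A') (a : A) :
    PowerSeries.map f.toRingHom (E R A a) = E R A' (f a) := by
  ext n
  simp [E, PowerSeries.coeff_map, map_smul, map_pow]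

lemma E_zero (A : Type*) [CommRing A] [Algebra R A] : E R A 0 = 1 := by
  ext n
  cases n <;> simp [E, PowerSeries.coeff_one]

lemma keyR (i j : ℕ) :
    algebraMap ℚ R ((i.factorial : ℚ)⁻¹) * algebraMap ℚ R ((j.factorial : ℚ)⁻¹) =
      (i + j).choose i • algebraMap ℚ R (((i + j).factorial : ℚ)⁻¹) := by
  rw [← map_mul, nsmul_eq_mul, ← map_natCast (algebraMap ℚ R), ← map_mul]
  congr 1
  have h := Nat.add_choose_mul_factorial_mul_factorial i j
  have h' : ((i + j).choose i : ℚ) * i.factorial * j.factorial = (i + j).factorial := by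
    rw [Nat.choose_symm_add]
    exact_mod_cast congrArg (Nat.cast : ℕ → ℚ) h
  have h0 : (i.factorial : ℚ) ≠ 0 := Nat.cast_ne_zero.mpr i.factorial_ne_zero
  have h1 : (j.factorial : ℚ) ≠ 0 := Nat.cast_ne_zero.mpr j.factorial_ne_zero
  have h2 : ((i + j).factorial : ℚ) ≠ 0 := Nat.cast_ne_zero.mpr (i + j).factorial_ne_zero
  field_simp
  linear_combination -h'

lemma E_add {A : Type*} [CommRing A] [Algebra R A] (a b : A) :
    E R A (a + b) = E R A a * E R A b := by
  ext n
  rw [PowerSeries.coeff_mul, Finset.Nat.sum_antidiagonal_eq_sum_range_succ_mk]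
  simp only [E, PowerSeries.coeff_mk]
  rw [add_pow, Finset.smul_sum]
  refine Finset.sum_congr rfl fun i hi => ?_
  have hin : i ≤ n := Nat.lt_succ_iff.mp (Finset.mem_range.mp hi)
  have hn : i + (n - i) = n := by omega
  rw [smul_mul_smul_comm, keyR]
  rw [hn]
  rw [smul_assoc, smul_comm]
  congr 1
  rw [nsmul_eq_mul, mul_comm]

lemma counit_primitive {x : B}
    (hx : Coalgebra.comul (R := R) x = x ⊗ₜ[R] 1 + 1 ⊗ₜ[R] x) :
    Coalgebra.counit (R := R) x = 0 := by
  have h := Coalgebra.rTensor_counit_comul (R := R) x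
  rw [hx] at h
  simp only [map_add, LinearMap.rTensor_tmul, Bialgebra.counit_one] at h
  have h2 : (Coalgebra.counit (R := R) x) ⊗ₜ[R] (1 : B) = 0 := by
    rw [add_comm] at h
    exact (add_eq_left).mp h
  have h3 := congrArg (TensorProduct.lid R B) h2
  simp only [map_zero, TensorProduct.lid_tmul] at h3
  have h4 := congrArg (Coalgebra.counit (R := R)) h3
  simpa [Bialgebra.counit_one] using h4

/-- **Exponentials of primitive tensors are Drinfel'd twists.**  If `r` is a finite
sum `Σᵢ xᵢ⊗yᵢ` with all `xᵢ`, `yᵢ` primitive, then `F = exp(ħ·r)` is invertible in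
`(B⊗B)[[ħ]]`, is normalized (coefficientwise) and satisfies the 2-cocycle condition
in `(B⊗B⊗B)[[ħ]]`. -/
theorem exp_primitive_is_twist
    (r : B ⊗[R] B) (n : ℕ) (x y : Fin n → B)
    (hx : ∀ i, Coalgebra.comul (R := R) (x i) = x i ⊗ₜ[R] 1 + 1 ⊗ₜ[R] x i)
    (hy : ∀ i, Coalgebra.comul (R := R) (y i) = y i ⊗ₜ[R] 1 + 1 ⊗ₜ[R] y i)
    (hr : r = ∑ i, x i ⊗ₜ[R] y i) :
    IsUnit (expF R B r) ∧
    PowerSeries.map (ε₁ R B).toRingHom (expF R B r) = 1 ∧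
    PowerSeries.map (ε₂ R B).toRingHom (expF R B r) = 1 ∧
    PowerSeries.map (ι₁₂ R B).toRingHom (expF R B r) *
        PowerSeries.map (Δ₁ R B).toRingHom (expF R B r) =
      PowerSeries.map (ι₂₃ R B).toRingHom (expF R B r) *
        PowerSeries.map (Δ₂ R B).toRingHom (expF R B r) := by
  have hexp : expF R B r = E R (B ⊗[R] B) r := rfl
  have hε1 : ε₁ R B r = 0 := by
    subst hr
    rw [map_sum]
    refine Finset.sum_eq_zero fun i _ => ?_
    simp [ε₁, ε, Algebra.TensorProduct.map_tmul, counit_primitive R B (hx i)]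
  have hε2 : ε₂ R B r = 0 := by
    subst hr
    rw [map_sum]
    refine Finset.sum_eq_zero fun i _ => ?_
    simp [ε₂, ε, Algebra.TensorProduct.map_tmul, counit_primitive R B (hy i)]
  have hkey : ι₁₂ R B r + Δ₁ R B r = ι₂₃ R B r + Δ₂ R B r := by
    subst hr
    simp only [map_sum, ← Finset.sum_add_distrib]
    refine Finset.sum_congr rfl fun i _ => ?_
    simp only [ι₁₂, ι₂₃, Δ₁, Δ₂, Δ, AlgHom.coe_comp, Function.comp_apply,
      AlgEquiv.toAlgHom_eq_coe, AlgHom.coe_coe,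
      Algebra.TensorProduct.map_tmul, AlgHom.coe_id, id_eq,
      Algebra.TensorProduct.includeLeft_apply, Algebra.TensorProduct.includeRight_apply,
      Bialgebra.comulAlgHom_apply, hx i, hy i]
    simp only [add_tmul, tmul_add, map_add, AlgEquiv.coe_toAlgHom, Algebra.TensorProduct.assoc_tmul]
    abel
  refine ⟨?_, ?_, ?_, ?_⟩
  · refine IsUnit.of_mul_eq_one (E R (B ⊗[R] B) (-r)) ?_
    rw [hexp, ← E_add, add_neg_cancel, E_zero]
  · rw [hexp, E_map, hε1, E_zero]
  · rw [hexp, E_map, hε2, E_zero]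
  · rw [hexp, E_map, E_map, E_map, E_map, ← E_add, ← E_add, hkey]

end Stmt
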